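/- arXiv:2112.15520 — 3 statements merged into one kernel-verified Lean document; each statement's English description precedes it below -/
import Mathlib

section
/- Let K be the Cantor space (compact, totally disconnected, perfect, metrizable) and Ω a compact connected metric space. Then for every homeomorphism α: K×Ω → K×Ω there exist a homeomorphism α̃ of K and a continuous map c: K → H(Ω) such that α(x,ω) = (α̃(x), c_x(ω)) for all (x,ω) ∈ K×Ω. -/
/-- Every homeomorphism of `K × Ω` (`K` the Cantor space, `Ω` compact connected metric)
is a skew product `α(x,ω) = (α̃ x, c_x ω)` with `c : K → H(Ω)` continuous for the uniform
metric on the homeomorphism group of `Ω`. -/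
theorem stmt_2 (K Ω : Type*) [MetricSpace K] [CompactSpace K]
    [TotallyDisconnectedSpace K] (hK : Perfect (Set.univ : Set K))
    [MetricSpace Ω] [CompactSpace Ω] [ConnectedSpace Ω]
    (α : (K × Ω) ≃ₜ (K × Ω)) :
    ∃ (α' : K ≃ₜ K) (c : K → (Ω ≃ₜ Ω)),
      (∀ (x : K) (ω : Ω), α (x, ω) = (α' x, c x ω)) ∧
      (∀ x : K, ∀ ε > (0:ℝ), ∃ δ > (0:ℝ), ∀ y : K, dist x y < δ →
        (⨆ ω : Ω, dist (c x ω) (c y ω)) +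
          (⨆ ω : Ω, dist ((c x).symm ω) ((c y).symm ω)) < ε) := by
  have hΩ : Nonempty Ω := inferInstance
  obtain ⟨ω₀⟩ := hΩ
  -- fibers map to fibers
  have key : ∀ (β : (K × Ω) ≃ₜ (K × Ω)) (x : K) (ω ω' : Ω),
      (β (x, ω)).1 = (β (x, ω')).1 := by
    intro β x ω ω'
    have hc : IsPreconnected ((fun ω : Ω => (β (x, ω)).1) '' Set.univ) :=
      isPreconnected_univ.image _
        (continuous_fst.comp (β.continuous.comp (Continuous.prodMk_right x))).continuousOn
    exact hc.subsingleton ⟨ω, trivial, rfl⟩ ⟨ω', trivial, rfl⟩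
  -- the base homeomorphism
  have leftinv : ∀ x : K, (α.symm ((α (x, ω₀)).1, ω₀)).1 = x := by
    intro x
    have := key α.symm ((α (x, ω₀)).1) ω₀ ((α (x, ω₀)).2)
    rw [this]
    have : ((α (x, ω₀)).1, (α (x, ω₀)).2) = α (x, ω₀) := rfl
    rw [this, α.symm_apply_apply]
  have rightinv : ∀ x : K, (α ((α.symm (x, ω₀)).1, ω₀)).1 = x := by
    intro x
    have := key α ((α.symm (x, ω₀)).1) ω₀ ((α.symm (x, ω₀)).2)
    rw [this]
    have : ((α.symm (x, ω₀)).1, (α.symm (x, ω₀)).2) = α.symm (x, ω₀) := rfl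
    rw [this, α.apply_symm_apply]
  set A : K ≃ₜ K :=
    { toFun := fun x => (α (x, ω₀)).1
      invFun := fun x => (α.symm (x, ω₀)).1
      left_inv := leftinv
      right_inv := rightinv
      continuous_toFun := continuous_fst.comp
        (α.continuous.comp (continuous_id.prodMk continuous_const))
      continuous_invFun := continuous_fst.comp
        (α.symm.continuous.comp (continuous_id.prodMk continuous_const)) } with hA
  have hAinv : ∀ x : K, ∀ ω : Ω, (α.symm (A x, ω)).1 = x := by
    intro x ω
    have := key α.symm (A x) ω ω₀
    rw [this]
    exact leftinv x
  set c : K → (Ω ≃ₜ Ω) := fun x =>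
    { toFun := fun ω => (α (x, ω)).2
      invFun := fun ω => (α.symm (A x, ω)).2
      left_inv := by
        intro ω
        show (α.symm (A x, (α (x, ω)).2)).2 = ω
        have h : (A x, (α (x, ω)).2) = α (x, ω) := Prod.ext (key α x ω₀ ω) rfl
        rw [h, α.symm_apply_apply]
      right_inv := by
        intro ω
        show (α (x, (α.symm (A x, ω)).2)).2 = ω
        have h : (x, (α.symm (A x, ω)).2) = α.symm (A x, ω) :=
          Prod.ext (hAinv x ω).symm rfl
        rw [h, α.apply_symm_apply]
      continuous_toFun := continuous_snd.comp
        (α.continuous.comp (Continuous.prodMk_right x))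
      continuous_invFun := continuous_snd.comp
        (α.symm.continuous.comp (Continuous.prodMk_right (A x))) } with hc
  have hskew : ∀ (x : K) (ω : Ω), α (x, ω) = (A x, c x ω) := by
    intro x ω
    have h1 : A x = (α (x, ω)).1 := key α x ω₀ ω
    exact Prod.ext h1.symm rfl
  refine ⟨A, c, hskew, ?_⟩
  intro x ε hε
  -- uniform continuity
  have hαu : UniformContinuous fun p : K × Ω => α p :=
    CompactSpace.uniformContinuous_of_continuous α.continuous
  have hβu : UniformContinuous fun p : K × Ω => α.symm p :=
    CompactSpace.uniformContinuous_of_continuous α.symm.continuous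
  obtain ⟨δ₁, hδ₁, Hδ₁⟩ := Metric.uniformContinuous_iff.mp hαu (ε/3) (by positivity)
  obtain ⟨δ₂, hδ₂, Hδ₂⟩ := Metric.uniformContinuous_iff.mp hβu (ε/3) (by positivity)
  obtain ⟨δ₃, hδ₃, Hδ₃⟩ := Metric.continuous_iff.mp A.continuous x δ₂ hδ₂
  refine ⟨min δ₁ δ₃, lt_min hδ₁ hδ₃, fun y hy => ?_⟩
  have hy1 : dist x y < δ₁ := lt_of_lt_of_le hy (min_le_left _ _)
  have hy3 : dist x y < δ₃ := lt_of_lt_of_le hy (min_le_right _ _)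
  have hA : dist (A y) (A x) < δ₂ := Hδ₃ y (by rwa [dist_comm])
  have hprod : ∀ (a b : K) (ω : Ω), dist ((a, ω) : K × Ω) (b, ω) = dist a b := by
    intro a b ω
    simp [Prod.dist_eq, dist_nonneg]
  have bound1 : (⨆ ω : Ω, dist (c x ω) (c y ω)) ≤ ε/3 := by
    apply ciSup_le
    intro ω
    have h1 : dist (c x ω) (c y ω) ≤ dist (α (x, ω)) (α (y, ω)) := by
      calc dist (c x ω) (c y ω) = dist (α (x, ω)).2 (α (y, ω)).2 := rfl
        _ ≤ dist (α (x, ω)) (α (y, ω)) := by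
            rw [Prod.dist_eq]; exact le_max_right _ _
    refine le_of_lt (lt_of_le_of_lt h1 ?_)
    apply Hδ₁
    rw [hprod]; exact hy1
  have bound2 : (⨆ ω : Ω, dist ((c x).symm ω) ((c y).symm ω)) ≤ ε/3 := by
    apply ciSup_le
    intro ω
    have h1 : dist ((c x).symm ω) ((c y).symm ω)
        ≤ dist (α.symm (A x, ω)) (α.symm (A y, ω)) := by
      calc dist ((c x).symm ω) ((c y).symm ω)
          = dist (α.symm (A x, ω)).2 (α.symm (A y, ω)).2 := rfl
        _ ≤ dist (α.symm (A x, ω)) (α.symm (A y, ω)) := by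
            rw [Prod.dist_eq]; exact le_max_right _ _
    refine le_of_lt (lt_of_le_of_lt h1 ?_)
    apply Hδ₂
    rw [hprod, dist_comm]; exact hA
  calc (⨆ ω : Ω, dist (c x ω) (c y ω)) +
        (⨆ ω : Ω, dist ((c x).symm ω) ((c y).symm ω))
      ≤ ε/3 + ε/3 := add_le_add bound1 bound2
    _ < ε := by linarith
end

section
/- Let X be a compact metric space and O ⊆ X a nonempty open set. Then the set E_O = {h ∈ H(X) : ⋃_{i=0}^{∞} hⁱ(O) = X} is open in H(X) with respect to the metric d(α,β) = sup d(α(x),β(x)) + sup d(α⁻¹(x),β⁻¹(x)). Moreover, h ∈ E_O if and only if there exists N with ⋃_{i=0}^{N} hⁱ(O) = X. -/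
/-- The uniform metric on the homeomorphism group of a compact metric space. -/
noncomputable def uD {X : Type*} [MetricSpace X] (α β : X ≃ₜ X) : ℝ :=
  (⨆ x : X, dist (α x) (β x)) + ⨆ x : X, dist (α.symm x) (β.symm x)

/-- `EO O` is the set of homeomorphisms whose forward iterates of `O` cover the space. -/
def EO {X : Type*} [TopologicalSpace X] (O : Set X) : Set (X ≃ₜ X) :=
  {h : X ≃ₜ X | (⋃ i : ℕ, (⇑h)^[i] '' O) = Set.univ}

private lemma isOpen_iter_image {X : Type*} [TopologicalSpace X] (h : X ≃ₜ X)
    {O : Set X} (hO : IsOpen O) (i : ℕ) : IsOpen ((⇑h)^[i] '' O) := by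
  induction i with
  | zero => simpa using hO
  | succ n ih =>
    rw [Function.iterate_succ', Set.image_comp]
    exact h.isOpenMap _ ih

private lemma mem_iter_image {X : Type*} [TopologicalSpace X] (h : X ≃ₜ X)
    (O : Set X) (i : ℕ) (x : X) :
    x ∈ (⇑h)^[i] '' O ↔ (⇑h.symm)^[i] x ∈ O := by
  constructor
  · rintro ⟨y, hy, rfl⟩
    rwa [(Function.LeftInverse.iterate h.symm_apply_apply i) y]
  · intro hx
    exact ⟨_, hx, (Function.LeftInverse.iterate h.apply_symm_apply i) x⟩

private lemma iter_close {X : Type*} [MetricSpace X] [CompactSpace X]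
    (h : X ≃ₜ X) (N : ℕ) :
    ∀ δ > (0:ℝ), ∃ ε > (0:ℝ), ∀ g : X ≃ₜ X,
      (∀ y, dist (h y) (g y) < ε) →
      ∀ i ≤ N, ∀ y, dist ((⇑h)^[i] y) ((⇑g)^[i] y) < δ := by
  induction N with
  | zero =>
    intro δ hδ
    refine ⟨δ, hδ, fun g _ i hi y => ?_⟩
    interval_cases i
    simpa using hδ
  | succ N ih =>
    intro δ hδ
    have huc : UniformContinuous ⇑h :=
      CompactSpace.uniformContinuous_of_continuous h.continuous
    obtain ⟨s, hs, hsH⟩ := Metric.uniformContinuous_iff.mp huc (δ/2) (by linarith)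
    obtain ⟨ε', hε', hmain⟩ := ih (min s δ) (lt_min hs hδ)
    refine ⟨min ε' (δ/2), lt_min hε' (by linarith), fun g hg i hi y => ?_⟩
    have hg' : ∀ y, dist (h y) (g y) < ε' := fun y => (hg y).trans_le (min_le_left _ _)
    by_cases hi' : i ≤ N
    · exact (hmain g hg' i hi' y).trans_le (min_le_right _ _)
    · obtain rfl : i = N + 1 := by omega
      have h1 := hmain g hg' N le_rfl y
      have h2 : dist (h ((⇑h)^[N] y)) (h ((⇑g)^[N] y)) < δ/2 :=
        hsH (h1.trans_le (min_le_left _ _))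
      have h3 : dist (h ((⇑g)^[N] y)) (g ((⇑g)^[N] y)) < δ/2 :=
        (hg _).trans_le (min_le_right _ _)
      calc dist ((⇑h)^[N+1] y) ((⇑g)^[N+1] y)
          = dist (h ((⇑h)^[N] y)) (g ((⇑g)^[N] y)) := by
            rw [Function.iterate_succ_apply', Function.iterate_succ_apply']
        _ ≤ dist (h ((⇑h)^[N] y)) (h ((⇑g)^[N] y))
              + dist (h ((⇑g)^[N] y)) (g ((⇑g)^[N] y)) := dist_triangle _ _ _
        _ < δ := by linarith

/-- `E_O` is open for the uniform metric on `H(X)`, and membership in `E_O` is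
equivalent to covering by finitely many iterates. -/
theorem stmt_7 (X : Type*) [MetricSpace X] [CompactSpace X]
    (O : Set X) (hO : IsOpen O) (hne : O.Nonempty) :
    (∀ h ∈ EO O, ∃ ε > (0:ℝ), ∀ g : X ≃ₜ X, uD h g < ε → g ∈ EO O) ∧
    (∀ h : X ≃ₜ X, h ∈ EO O ↔ ∃ N : ℕ, (⋃ i ≤ N, (⇑h)^[i] '' O) = Set.univ) := by
  obtain ⟨x₀, hx₀⟩ := hne
  haveI : Nonempty X := ⟨x₀⟩
  -- the finite-cover characterization
  have hiff : ∀ h : X ≃ₜ X, h ∈ EO O ↔ ∃ N : ℕ, (⋃ i ≤ N, (⇑h)^[i] '' O) = Set.univ := by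
    intro h
    constructor
    · intro hh
      obtain ⟨t, ht⟩ := isCompact_univ.elim_finite_subcover (fun i : ℕ => (⇑h)^[i] '' O)
        (fun i => isOpen_iter_image h hO i) (by rw [hh])
      refine ⟨t.sup id, Set.eq_univ_of_univ_subset ?_⟩
      refine ht.trans (Set.iUnion₂_subset fun i hi => fun x hx => ?_)
      exact Set.mem_iUnion₂.mpr ⟨i, Finset.le_sup (f := id) hi, hx⟩
    · rintro ⟨N, hN⟩
      refine Set.eq_univ_of_univ_subset ?_
      rw [← hN]
      exact Set.iUnion₂_subset fun i _ => Set.subset_iUnion (fun i => (⇑h)^[i] '' O) i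
  refine ⟨?_, hiff⟩
  intro h hh
  obtain ⟨N, hN⟩ := (hiff h).mp hh
  -- Lebesgue number for the finite cover
  have hcov : Set.univ ⊆ ⋃ i : Fin (N + 1), (⇑h)^[i.1] '' O := by
    intro x _
    have : x ∈ ⋃ i ≤ N, (⇑h)^[i] '' O := hN ▸ Set.mem_univ x
    simp only [Set.mem_iUnion] at this ⊢
    obtain ⟨i, hi, hx⟩ := this
    exact ⟨⟨i, Nat.lt_succ_of_le hi⟩, hx⟩
  obtain ⟨δ, hδ, hball⟩ := lebesgue_number_lemma_of_metric isCompact_univ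
    (fun i : Fin (N + 1) => isOpen_iter_image h hO i.1) hcov
  obtain ⟨ε, hε, hεmain⟩ := iter_close h N δ hδ
  refine ⟨ε, hε, fun g hug => ?_⟩
  -- from uD h g < ε get pointwise forward bound
  have hpt : ∀ y, dist (h y) (g y) < ε := by
    intro y
    have hbdd : BddAbove (Set.range fun y => dist (h y) (g y)) :=
      (isCompact_range (by continuity)).bddAbove
    have h1 : dist (h y) (g y) ≤ ⨆ x : X, dist (h x) (g x) := le_ciSup hbdd y
    have h2 : (0:ℝ) ≤ ⨆ x : X, dist (h.symm x) (g.symm x) :=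
      Real.iSup_nonneg fun x => dist_nonneg
    have := hug
    unfold uD at this
    linarith
  -- show g ∈ EO O
  refine Set.eq_univ_of_forall fun x => ?_
  obtain ⟨i, hib⟩ := hball x (Set.mem_univ x)
  set y := (⇑g.symm)^[i.1] x with hy
  have hgy : (⇑g)^[i.1] y = x := (Function.LeftInverse.iterate g.apply_symm_apply i.1) x
  have hdist : dist ((⇑h)^[i.1] y) ((⇑g)^[i.1] y) < δ :=
    hεmain g hpt i.1 (Nat.lt_succ_iff.mp i.2) y
  have hmem : (⇑h)^[i.1] y ∈ (⇑h)^[i.1] '' O := by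
    apply hib
    rw [Metric.mem_ball]
    calc dist ((⇑h)^[i.1] y) x = dist ((⇑h)^[i.1] y) ((⇑g)^[i.1] y) := by rw [hgy]
      _ < δ := hdist
  have hyO : y ∈ O := by
    obtain ⟨z, hz, hzy⟩ := hmem
    rwa [(h.injective.iterate i.1) hzy] at hz
  exact Set.mem_iUnion.mpr ⟨i.1, ⟨y, hyO, hgy⟩⟩
end

section
/- Let K be a compact metric space, α̃: K → K a minimal homeomorphism, H a torsion-free abelian group, and e ∈ H a nonzero element. If f: K → ℤ is continuous and there exists a locally constant G: K → H with f(x)·e = G(x) − G(α̃⁻¹(x)) for all x ∈ K, then there exists a continuous g: K → ℤ with f(x) = g(x) − g(α̃⁻¹(x)) for all x ∈ K. Consequently, the positive group homomorphism ι: C(K,ℤ)/{h − h∘α̃⁻¹} → C(K,H)/{G − G∘α̃⁻¹} induced by f ↦ f·e is injective. -/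
theorem main_aux (K : Type*) [MetricSpace K] [CompactSpace K] (α : K ≃ₜ K)
    (hmin : ∀ F : Set K, IsClosed F → ⇑α '' F = F → F = ∅ ∨ F = Set.univ)
    (H : Type*) [AddCommGroup H] [NoZeroSMulDivisors ℤ H] (e : H) (he : e ≠ 0)
    (f : K → ℤ)
    (hG : ∃ G : K → H, IsLocallyConstant G ∧ ∀ x : K, f x • e = G x - G (α.symm x)) :
    ∃ g : K → ℤ, Continuous g ∧ ∀ x : K, f x = g x - g (α.symm x) := by
  obtain ⟨G, hGlc, hGf⟩ := hG
  rcases isEmpty_or_nonempty K with hK | hK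
  · exact ⟨fun _ => 0, continuous_of_const (fun x => (hK.elim x)), fun x => hK.elim x⟩
  obtain ⟨x₀⟩ := hK
  set A : Set K := G ⁻¹' {y | ∃ n : ℤ, y = G x₀ + n • e} with hA
  have hmemiff : ∀ x : K, x ∈ A ↔ ∃ n : ℤ, G x = G x₀ + n • e := fun x => Iff.rfl
  have hclosed : IsClosed A := by
    rw [← isOpen_compl_iff]
    have : Aᶜ = G ⁻¹' {y | ∃ n : ℤ, y = G x₀ + n • e}ᶜ := rfl
    rw [this]
    exact hGlc _
  have hinv : ⇑α '' A = A := by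
    ext x
    constructor
    · rintro ⟨y, hy, rfl⟩
      obtain ⟨n, hn⟩ := hy
      refine ⟨n + f (α y), ?_⟩
      have := hGf (α y)
      simp only [Homeomorph.symm_apply_apply] at this
      have hGx : G (α y) = G y + f (α y) • e := by rw [this]; abel
      rw [hGx, hn, add_smul]; abel
    · intro hx
      obtain ⟨n, hn⟩ := hx
      refine ⟨α.symm x, ⟨n - f x, ?_⟩, α.apply_symm_apply x⟩
      have := hGf x
      have : G (α.symm x) = G x - f x • e := by rw [hGf x]; abel
      rw [this, hn, sub_smul]; abel
  have hne : A ≠ ∅ := by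
    intro h
    have : x₀ ∈ A := ⟨0, by simp⟩
    rw [h] at this; exact this
  have hAuniv : A = Set.univ := (hmin A hclosed hinv).resolve_left hne
  have hall : ∀ x : K, ∃ n : ℤ, G x = G x₀ + n • e := by
    intro x
    have : x ∈ A := hAuniv ▸ Set.mem_univ x
    exact this
  classical
  set h : H → ℤ := fun y => if hy : ∃ n : ℤ, y = G x₀ + n • e then hy.choose else 0 with hh
  set g : K → ℤ := h ∘ G with hg
  have hgspec : ∀ x : K, G x = G x₀ + g x • e := by
    intro x
    have hx := hall x
    simp only [hg, hh, Function.comp_apply, dif_pos hx]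
    exact hx.choose_spec
  have hsmul : ∀ n m : ℤ, n • e = m • e → n = m := by
    intro n m hnm
    have : (n - m) • e = 0 := by rw [sub_smul, hnm, sub_self]
    rcases smul_eq_zero.mp this with h1 | h1
    · linarith [sub_eq_zero.mp (by exact_mod_cast h1)]
    · exact absurd h1 he
  refine ⟨g, (hGlc.comp h).continuous, fun x => ?_⟩
  apply hsmul
  rw [hGf x, hgspec x, hgspec (α.symm x), sub_smul]
  abel

/-- If `f • e` is a coboundary for a locally constant function valued in a torsion-free
abelian group `H` (with `e ≠ 0`), then `f` itself is an integer coboundary; consequently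
the induced positive homomorphism `C(K,ℤ)/coboundaries → C(K,H)/coboundaries`, `f ↦ f·e`,
is injective. -/
theorem stmt_18 (K : Type*) [MetricSpace K] [CompactSpace K] (α : K ≃ₜ K)
    (hmin : ∀ F : Set K, IsClosed F → ⇑α '' F = F → F = ∅ ∨ F = Set.univ)
    (H : Type*) [AddCommGroup H] [NoZeroSMulDivisors ℤ H] (e : H) (he : e ≠ 0) :
    (∀ f : K → ℤ, Continuous f →
      (∃ G : K → H, IsLocallyConstant G ∧ ∀ x : K, f x • e = G x - G (α.symm x)) →
      ∃ g : K → ℤ, Continuous g ∧ ∀ x : K, f x = g x - g (α.symm x)) ∧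
    (∀ f₁ f₂ : K → ℤ, Continuous f₁ → Continuous f₂ →
      (∃ G : K → H, IsLocallyConstant G ∧
        ∀ x : K, (f₁ x - f₂ x) • e = G x - G (α.symm x)) →
      ∃ g : K → ℤ, Continuous g ∧ ∀ x : K, f₁ x - f₂ x = g x - g (α.symm x)) := by
  constructor
  · exact fun f _ hG => main_aux K α hmin H e he f hG
  · exact fun f₁ f₂ _ _ hG => main_aux K α hmin H e he (f₁ - f₂) hG
end
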